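/- Let G_{n,p} (n ≥ 2, p ≥ 1) be the relatively free group on n generators in the variety defined by the law [X^p, Y^p] = 1. Then for every ξ ∈ G_{n,p} and every m ∈ N, there exists an m-aperiodic sequence x_1, ..., x_{2k} of nontrivial elements, each of the form u^{±p} for a generator u, such that ξ x_1 ξ^{-1} x_2 ξ x_3 ξ^{-1} x_4 ⋯ ξ x_{2k-1} ξ^{-1} x_{2k} = 1. In particular, G_{n,p} does not satisfy property (P'_m) for any m. -/

import Mathlib

/-- A list is `k`-aperiodic if it contains no factor of the form `y^(k+1)` with `y` nonempty. -/
def KAperiodic {α : Type*} (k : ℕ) (l : List α) : Prop :=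
  ∀ x y z : List α, l = x ++ (List.replicate (k + 1) y).flatten ++ z → y = []

open scoped commutatorElement

/-- The relatively free group on `n` generators of the variety `[Xᵖ, Yᵖ] = 1`. -/
def Gnp (n p : ℕ) : Type :=
  FreeGroup (Fin n) ⧸ Subgroup.normalClosure
    {w : FreeGroup (Fin n) | ∃ u v : FreeGroup (Fin n), w = ⁅u ^ p, v ^ p⁆}

noncomputable instance (n p : ℕ) : Group (Gnp n p) :=
  inferInstanceAs (Group (FreeGroup (Fin n) ⧸ _))

/-- The images of the free generators in `Gnp n p`. -/
def GnpGen (n p : ℕ) (i : Fin n) : Gnp n p :=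
  QuotientGroup.mk (FreeGroup.of i)

/-- The alternating product `ξ x₁ ξ⁻¹ x₂ ξ x₃ ξ⁻¹ x₄ ⋯`. -/
def altProd {G : Type*} [Group G] (ξ : G) (l : List G) : G :=
  (l.zipIdx.map fun p => (if p.2 % 2 = 0 then ξ else ξ⁻¹) * p.1).prod

/-- p-th powers commute in `Gnp n p`. -/
lemma Gnp.pow_commute (n p : ℕ) (u v : Gnp n p) : Commute (u ^ p) (v ^ p) := by
  obtain ⟨u', rfl⟩ := QuotientGroup.mk_surjective u
  obtain ⟨v', rfl⟩ := QuotientGroup.mk_surjective v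
  rw [← commutatorElement_eq_one_iff_commute]
  have h : ((QuotientGroup.mk' _ : FreeGroup (Fin n) →*
      (FreeGroup (Fin n) ⧸ Subgroup.normalClosure
        {w : FreeGroup (Fin n) | ∃ u v : FreeGroup (Fin n), w = ⁅u ^ p, v ^ p⁆}))
      ⁅u' ^ p, v' ^ p⁆) = 1 := by
    rw [QuotientGroup.mk'_apply, QuotientGroup.eq_one_iff]
    exact Subgroup.subset_normalClosure ⟨u', v', rfl⟩
  rw [map_commutatorElement, map_pow, map_pow] at h
  exact h

/-- Abelianized multidegree homomorphism. -/
noncomputable def GnpPhi (n p : ℕ) : Gnp n p →* Multiplicative (Fin n → ℤ) :=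
  QuotientGroup.lift _ (FreeGroup.lift fun i => Multiplicative.ofAdd (Pi.single i 1))
    (by
      apply Subgroup.normalClosure_le_normal
      rintro w ⟨u, v, rfl⟩
      simp only [SetLike.mem_coe, MonoidHom.mem_ker, map_commutatorElement]
      exact commutatorElement_eq_one_iff_commute.2 (Commute.all (S := Multiplicative (Fin n → ℤ)) _ _))

lemma GnpPhi_gen_zpow (n p : ℕ) (i : Fin n) (c : ℤ) :
    GnpPhi n p (GnpGen n p i ^ c) = Multiplicative.ofAdd (Pi.single i c) := by
  have h : GnpPhi n p (GnpGen n p i) = Multiplicative.ofAdd (Pi.single i 1) := by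
    show QuotientGroup.lift _ _ _ (QuotientGroup.mk (FreeGroup.of i)) = _
    rw [QuotientGroup.lift_mk, FreeGroup.lift_apply_of]
  rw [map_zpow, h, ← ofAdd_zsmul]
  congr 1
  funext j
  by_cases hj : j = i <;> simp [hj, Pi.single_apply]

lemma gen_zpow_inj (n p : ℕ) {i j : Fin n} {c d : ℤ}
    (h : GnpGen n p i ^ c = GnpGen n p j ^ d) :
    (Pi.single i c : Fin n → ℤ) = Pi.single j d := by
  have := congrArg (GnpPhi n p) h
  rw [GnpPhi_gen_zpow, GnpPhi_gen_zpow] at this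
  exact Multiplicative.ofAdd.injective this

lemma nodup_kaperiodic {α : Type*} {k : ℕ} (hk : 1 ≤ k) {l : List α} (h : l.Nodup) : KAperiodic k l := by
  classical
  intro x y z hl
  by_contra hy
  obtain ⟨a, ha⟩ := List.exists_mem_of_ne_nil y hy
  have hcy : 1 ≤ y.count a := List.count_pos_iff.mpr ha
  have hflat : ∀ m : ℕ, ((List.replicate m y).flatten).count a = m * y.count a := by
    intro m
    induction m with
    | zero => simp
    | succ m ih => simp [List.replicate_succ, List.count_append, ih]; ring
  have h1 : l.count a ≤ 1 := List.nodup_iff_count_le_one.mp h a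
  rw [hl] at h1
  simp only [List.count_append, hflat] at h1
  have h2 : 2 * 1 ≤ (k + 1) * y.count a := Nat.mul_le_mul (by omega) hcy
  omega

lemma comm_aux {G : Type*} [Group G] (ξ X Y : G) (h : Commute (ξ * X * ξ⁻¹) Y) :
    ξ * X * (ξ⁻¹ * Y * (ξ * X⁻¹ * (ξ⁻¹ * Y⁻¹))) = 1 := by
  have he := h.eq
  calc ξ * X * (ξ⁻¹ * Y * (ξ * X⁻¹ * (ξ⁻¹ * Y⁻¹)))
      = (ξ * X * ξ⁻¹ * Y) * (ξ * X⁻¹ * ξ⁻¹ * Y⁻¹) := by group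
    _ = (Y * (ξ * X * ξ⁻¹)) * (ξ * X⁻¹ * ξ⁻¹ * Y⁻¹) := by rw [he]
    _ = 1 := by group

theorem stmt_14 (n p : ℕ) (hn : 2 ≤ n) (hp : 1 ≤ p)
    (ξ : Gnp n p) (m : ℕ) (hm : 1 ≤ m) :
    ∃ (k : ℕ) (l : List (Gnp n p)), 1 ≤ k ∧ l.length = 2 * k ∧
      KAperiodic m l ∧
      (∀ x ∈ l, x ≠ 1 ∧ ∃ i : Fin n,
        x = GnpGen n p i ^ (p : ℤ) ∨ x = GnpGen n p i ^ (-(p : ℤ))) ∧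
      altProd ξ l = 1 := by
  have hP : (p : ℤ) ≠ 0 := Int.natCast_ne_zero.mpr (by omega)
  set i0 : Fin n := ⟨0, by omega⟩ with hi0
  set i1 : Fin n := ⟨1, by omega⟩ with hi1
  have hi : i0 ≠ i1 := by simp [hi0, hi1, Fin.ext_iff]
  have key : ∀ (i j : Fin n) (c d : ℤ), c ≠ 0 → (i ≠ j ∨ c ≠ d) →
      GnpGen n p i ^ c ≠ GnpGen n p j ^ d := by
    intro i j c d hc hij h
    have hfun := gen_zpow_inj n p h
    have hti := congrFun hfun i
    rw [Pi.single_eq_same] at hti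
    by_cases hij' : i = j
    · subst hij'
      rw [Pi.single_eq_same] at hti
      rcases hij with h' | h'
      · exact h' rfl
      · exact h' hti
    · rw [Pi.single_eq_of_ne hij'] at hti
      exact hc hti
  have hne1 : ∀ (i : Fin n) (c : ℤ), c ≠ 0 → GnpGen n p i ^ c ≠ 1 := by
    intro i c hc h
    have h' : GnpGen n p i ^ c = GnpGen n p i ^ (0 : ℤ) := by simpa using h
    have hti := congrFun (gen_zpow_inj n p h') i
    simp at hti
    exact hc hti
  have hPP : (p : ℤ) ≠ -(p : ℤ) := by omega
  have hnodup : ([GnpGen n p i0 ^ (p : ℤ), GnpGen n p i1 ^ (p : ℤ),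
      GnpGen n p i0 ^ (-(p : ℤ)), GnpGen n p i1 ^ (-(p : ℤ))] : List (Gnp n p)).Nodup := by
    refine List.nodup_cons.mpr ⟨?_, List.nodup_cons.mpr ⟨?_, List.nodup_cons.mpr ⟨?_,
      List.nodup_singleton _⟩⟩⟩
    · simp only [List.mem_cons, List.not_mem_nil, or_false]
      push_neg
      exact ⟨key i0 i1 _ _ hP (Or.inl hi), key i0 i0 _ _ hP (Or.inr hPP),
        key i0 i1 _ _ hP (Or.inl hi)⟩
    · simp only [List.mem_cons, List.not_mem_nil, or_false]
      push_neg
      exact ⟨key i1 i0 _ _ hP (Or.inl hi.symm), key i1 i1 _ _ hP (Or.inr hPP)⟩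
    · simpa using key i0 i1 (-(p : ℤ)) (-(p : ℤ)) (by omega) (Or.inl hi)
  refine ⟨2, [GnpGen n p i0 ^ (p : ℤ), GnpGen n p i1 ^ (p : ℤ),
      GnpGen n p i0 ^ (-(p : ℤ)), GnpGen n p i1 ^ (-(p : ℤ))],
      by norm_num, by norm_num, nodup_kaperiodic hm hnodup, ?_, ?_⟩
  · intro x hx
    simp only [List.mem_cons, List.not_mem_nil, or_false] at hx
    rcases hx with rfl | rfl | rfl | rfl
    · exact ⟨hne1 i0 _ hP, i0, Or.inl rfl⟩
    · exact ⟨hne1 i1 _ hP, i1, Or.inl rfl⟩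
    · exact ⟨hne1 i0 _ (by omega), i0, Or.inr rfl⟩
    · exact ⟨hne1 i1 _ (by omega), i1, Or.inr rfl⟩
  · have hcomm := Gnp.pow_commute n p (ξ * GnpGen n p i0 * ξ⁻¹) (GnpGen n p i1)
    rw [conj_pow] at hcomm
    have hz0 : (GnpGen n p i0 : Gnp n p) ^ ((p : ℤ)) = GnpGen n p i0 ^ p := zpow_natCast _ _
    have hz0' : (GnpGen n p i0 : Gnp n p) ^ (-(p : ℤ)) = (GnpGen n p i0 ^ p)⁻¹ := by
      rw [zpow_neg, zpow_natCast]
    have hz1 : (GnpGen n p i1 : Gnp n p) ^ ((p : ℤ)) = GnpGen n p i1 ^ p := zpow_natCast _ _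
    have hz1' : (GnpGen n p i1 : Gnp n p) ^ (-(p : ℤ)) = (GnpGen n p i1 ^ p)⁻¹ := by
      rw [zpow_neg, zpow_natCast]
    simp only [altProd, List.zipIdx_cons, List.zipIdx_nil, List.map_cons, List.map_nil,
      List.prod_cons, List.prod_nil, hz0, hz0', hz1, hz1']
    norm_num
    exact comm_aux ξ _ _ hcomm
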